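/- Let A be a finite set, v a nonnegative score matrix, and C ⊆ A a cluster for v. If x, y ∈ A are not both in C, then the indirect score v*_{xy} equals the maximum of path scores over only those paths from x to y that contain at most one element of C. -/

import Mathlib

/-- The score of a path (a list of vertices): the minimum of the scores
of its consecutive links. -/
def pathScore {A : Type*} (v : A → A → ℝ) : List A → ℝ
  | [] => 0
  | [_] => 0
  | [a, b] => v a b
  | a :: b :: c :: l => min (v a b) (pathScore v (b :: c :: l))

/-- `l` is a path from `x` to `y`: a list with at least two entries,
starting at `x` and ending at `y`. -/
def IsPath {A : Type*} (x y : A) (l : List A) : Prop :=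
  2 ≤ l.length ∧ l.head? = some x ∧ l.getLast? = some y

/-- The max-min indirect score `v*_{xy}`: the supremum (attained, since the
set of path scores is finite) of path scores over all paths from `x` to `y`. -/
noncomputable def indirectScore {A : Type*} (v : A → A → ℝ) (x y : A) : ℝ :=
  ⨆ l : {l : List A // IsPath x y l}, pathScore v l.1

section AuxLemmas

variable {A : Type*}

lemma chain'_of_le_pathScore (v : A → A → ℝ) (m : ℝ) :
    ∀ l : List A, m ≤ pathScore v l → l.Chain' (fun p q => m ≤ v p q)
  | [], _ => List.isChain_nil
  | [a], _ => List.isChain_singleton a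
  | [a, b], h => by
    rw [List.Chain', List.isChain_cons_cons]
    exact ⟨h, List.isChain_singleton b⟩
  | a :: b :: c :: t, h => by
    rw [pathScore] at h
    rw [List.Chain', List.isChain_cons_cons]
    exact ⟨h.trans (min_le_left _ _),
      chain'_of_le_pathScore v m (b :: c :: t) (h.trans (min_le_right _ _))⟩

lemma le_pathScore_of_chain' (v : A → A → ℝ) (m : ℝ) :
    ∀ l : List A, 2 ≤ l.length → l.Chain' (fun p q => m ≤ v p q) → m ≤ pathScore v l
  | [], h, _ => by simp at h
  | [a], h, _ => by simp at h
  | [a, b], _, h => (List.isChain_cons_cons.mp h).1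
  | a :: b :: c :: t, _, h => by
    rw [pathScore]
    rcases List.isChain_cons_cons.mp h with ⟨h1, h2⟩
    exact le_min h1 (le_pathScore_of_chain' v m (b :: c :: t) (by simp) h2)

lemma pathScore_le_bound (v : A → A → ℝ) (B : ℝ) (h0 : 0 ≤ B) (hB : ∀ a b, v a b ≤ B) :
    ∀ l : List A, pathScore v l ≤ B
  | [] => h0
  | [_] => h0
  | [a, b] => hB a b
  | a :: b :: _ :: _ => (min_le_left _ _).trans (hB a b)

lemma head?_takeWhile_ne (p : A → Bool) (l : List A) (h : l.takeWhile p ≠ []) :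
    (l.takeWhile p).head? = l.head? := by
  cases l with
  | nil => simp at h
  | cons a t =>
    by_cases hpa : p a
    · simp [List.takeWhile_cons, hpa]
    · simp [List.takeWhile_cons, hpa] at h

lemma reduce_path {A : Type*} [DecidableEq A] (v : A → A → ℝ) (C : Finset A)
    (hC : ∀ a ∈ C, ∀ b ∈ C, ∀ x ∉ C, v a x = v b x ∧ v x a = v x b)
    (x y : A) (hxy : x ≠ y) (hnot : ¬(x ∈ C ∧ y ∈ C)) (l : List A) (hl : IsPath x y l) :
    ∃ l' : List A, (IsPath x y l' ∧ l'.countP (fun a => decide (a ∈ C)) ≤ 1) ∧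
      pathScore v l ≤ pathScore v l' := by
  classical
  by_cases hcnt : l.countP (fun a => decide (a ∈ C)) ≤ 1
  · exact ⟨l, ⟨hl, hcnt⟩, le_rfl⟩
  obtain ⟨hlen, hhead, hlast⟩ := hl
  have hex : ∃ a ∈ l, a ∈ C := by
    by_contra h
    push_neg at h
    have h0 : l.countP (fun a => decide (a ∈ C)) = 0 :=
      List.countP_eq_zero.mpr (by simpa using h)
    omega
  set p : A → Bool := fun a => !decide (a ∈ C) with hp
  set P := l.takeWhile p with hPdef
  set M := l.dropWhile p with hMdef
  have hPM : P ++ M = l := List.takeWhile_append_dropWhile (p := p) (l := l)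
  have hMne : M ≠ [] := by
    intro h
    obtain ⟨a, hal, haC⟩ := hex
    have := List.dropWhile_eq_nil_iff.mp h a hal
    simp [hp, haC] at this
  have hMheadC : M.head hMne ∈ C := by
    have := List.head_dropWhile_not p (l := l) hMne
    simpa [hp] using this
  set S := (l.reverse.takeWhile p).reverse with hSdef
  set T := (l.reverse.dropWhile p).reverse with hTdef
  have hTS : T ++ S = l := by
    rw [hTdef, hSdef, ← List.reverse_append, List.takeWhile_append_dropWhile,
      List.reverse_reverse]
  have hrTne : l.reverse.dropWhile p ≠ [] := by
    intro h
    obtain ⟨a, hal, haC⟩ := hex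
    have := List.dropWhile_eq_nil_iff.mp h a (by simpa using hal)
    simp [hp, haC] at this
  have hTne : T ≠ [] := by rw [hTdef]; simpa using hrTne
  have hTlastC : T.getLast hTne ∈ C := by
    have h1 := List.head_dropWhile_not p (l := l.reverse) hrTne
    have h2 : T.getLast? = some ((l.reverse.dropWhile p).head hrTne) := by
      rw [hTdef, List.getLast?_reverse, List.head?_eq_head hrTne]
    rw [List.getLast?_eq_getLast (l := T) hTne, Option.some_inj] at h2
    rw [h2]
    simpa [hp] using h1
  have hPnotC : ∀ a ∈ P, a ∉ C := by
    intro a ha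
    have := List.mem_takeWhile_imp (hPdef ▸ ha)
    simpa [hp] using this
  have hSnotC : ∀ a ∈ S, a ∉ C := by
    intro a ha
    have ha' : a ∈ l.reverse.takeWhile p := by
      rw [hSdef, List.mem_reverse] at ha; exact ha
    have := List.mem_takeWhile_imp ha'
    simpa [hp] using this
  set c : A := if y ∈ C then y else M.head hMne with hcdef
  have hcC : c ∈ C := by
    rw [hcdef]; split
    · assumption
    · exact hMheadC
  set l' : List A := P ++ c :: S with hl'def
  have hl'head : l'.head? = some x := by
    rw [hl'def, List.head?_append]
    rcases eq_or_ne P [] with hPe | hPne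
    · have hMl : M = l := by rw [← hPM, hPe, List.nil_append]
      have hxM : M.head hMne = x := by
        have h1 : l.head? = some (M.head hMne) := by
          rw [← hMl]; exact List.head?_eq_head hMne
        rw [hhead] at h1
        exact (Option.some_inj.mp h1).symm
      have hxC : x ∈ C := hxM ▸ hMheadC
      have hyC : y ∉ C := fun hy => hnot ⟨hxC, hy⟩
      rw [hPe]
      simp [hcdef, if_neg hyC, hxM]
    · rw [head?_takeWhile_ne p l (hPdef ▸ hPne), hhead]
      rfl
  have hl'last : l'.getLast? = some y := by
    rw [hl'def, List.getLast?_append]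
    rcases eq_or_ne S [] with hSe | hSne
    · have hTl : T = l := by rw [← hTS, hSe, List.append_nil]
      have hyT : T.getLast hTne = y := by
        have h1 : l.getLast? = some (T.getLast hTne) := by
          rw [← hTl]; exact List.getLast?_eq_getLast (l := T) hTne
        rw [hlast] at h1
        exact (Option.some_inj.mp h1).symm
      have hyC : y ∈ C := hyT ▸ hTlastC
      rw [hSe]
      simp [hcdef, if_pos hyC]
    · have hrne : l.reverse.takeWhile p ≠ [] := by
        intro h; apply hSne; rw [hSdef, h, List.reverse_nil]
      have hSlast : S.getLast? = some y := by
        rw [hSdef, List.getLast?_reverse, head?_takeWhile_ne p l.reverse hrne,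
          List.head?_reverse, hlast]
      have h3 : (c :: S).getLast? = some y := by
        rw [show (c :: S) = [c] ++ S from rfl, List.getLast?_append, hSlast]
        rfl
      rw [h3]
      rfl
  have hl'len : 2 ≤ l'.length := by
    have hlen' : l'.length = P.length + S.length + 1 := by
      rw [hl'def]; simp [List.length_append]; omega
    by_contra hlt
    push_neg at hlt
    have h1 : P = [] := List.length_eq_zero_iff.mp (by omega)
    have h2 : S = [] := List.length_eq_zero_iff.mp (by omega)
    have hx' := hl'head
    have hy' := hl'last
    rw [hl'def, h1, h2] at hx' hy'
    simp at hx' hy'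
    exact hxy (hx'.symm.trans hy')
  have hl'cnt : l'.countP (fun a => decide (a ∈ C)) ≤ 1 := by
    rw [hl'def, List.countP_append, List.countP_cons]
    have h1 : P.countP (fun a => decide (a ∈ C)) = 0 :=
      List.countP_eq_zero.mpr (by intro a ha; simpa using hPnotC a ha)
    have h2 : S.countP (fun a => decide (a ∈ C)) = 0 :=
      List.countP_eq_zero.mpr (by intro a ha; simpa using hSnotC a ha)
    rw [h1, h2]
    simp [hcC]
  set m := pathScore v l with hm
  have hchain : l.Chain' (fun a b => m ≤ v a b) := chain'_of_le_pathScore v m l le_rfl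
  have hc1 : (P ++ M).Chain' (fun a b => m ≤ v a b) := by rw [hPM]; exact hchain
  have hc2 : (T ++ S).Chain' (fun a b => m ≤ v a b) := by rw [hTS]; exact hchain
  obtain ⟨cP, cM, crossPM⟩ := List.isChain_append.mp hc1
  obtain ⟨cT, cS, crossTS⟩ := List.isChain_append.mp hc2
  have hchain' : l'.Chain' (fun a b => m ≤ v a b) := by
    rw [hl'def, List.Chain', List.isChain_append]
    refine ⟨cP, ?_, ?_⟩
    · rw [List.isChain_cons]
      refine ⟨?_, cS⟩
      intro b hb
      have hSne : S ≠ [] := by intro h; rw [h] at hb; simp at hb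
      have hbS : b ∈ S := List.mem_of_mem_head? hb
      have hbC : b ∉ C := hSnotC b hbS
      have hcr := crossTS (T.getLast hTne)
        (Option.mem_def.mpr (List.getLast?_eq_getLast (l := T) hTne)) b hb
      rw [(hC c hcC (T.getLast hTne) hTlastC b hbC).1]
      exact hcr
    · intro a ha b hb
      have hb' : c = b := by simpa using hb
      subst hb'
      have haP : a ∈ P := List.mem_of_mem_getLast? ha
      have haC : a ∉ C := hPnotC a haP
      have hcr := crossPM a ha (M.head hMne)
        (Option.mem_def.mpr (List.head?_eq_head hMne))
      rw [hcdef]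
      split_ifs with hyC
      · rw [(hC y hyC (M.head hMne) hMheadC a haC).2]
        exact hcr
      · exact hcr
  exact ⟨l', ⟨⟨hl'len, hl'head, hl'last⟩, hl'cnt⟩,
    le_pathScore_of_chain' v m l' hl'len hchain'⟩

end AuxLemmas

theorem stmt14 {A : Type*} [Fintype A] [DecidableEq A] (v : A → A → ℝ)
    (hv : ∀ x y : A, 0 ≤ v x y)
    (C : Finset A)
    (hC : ∀ a ∈ C, ∀ b ∈ C, ∀ x ∉ C, v a x = v b x ∧ v x a = v x b)
    (x y : A) (hxy : x ≠ y) (hnot : ¬ (x ∈ C ∧ y ∈ C)) :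
    indirectScore v x y =
      ⨆ l : {l : List A // IsPath x y l ∧ l.countP (fun a => decide (a ∈ C)) ≤ 1},
        pathScore v l.1 := by
  classical
  have hne : (Finset.univ : Finset (A × A)).Nonempty := ⟨(x, y), Finset.mem_univ _⟩
  set B := (Finset.univ : Finset (A × A)).sup' hne (fun q => v q.1 q.2) with hB
  have hvB : ∀ a b, v a b ≤ B := fun a b =>
    Finset.le_sup' (fun q : A × A => v q.1 q.2) (Finset.mem_univ (a, b))
  have h0B : 0 ≤ B := (hv x y).trans (hvB x y)
  have hbound : ∀ l : List A, pathScore v l ≤ B := pathScore_le_bound v B h0B hvB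
  have hpxy : IsPath x y [x, y] := ⟨by simp, by simp, by simp⟩
  have hcxy : ([x, y] : List A).countP (fun a => decide (a ∈ C)) ≤ 1 := by
    by_cases hx : x ∈ C <;> by_cases hy : y ∈ C
    · exact absurd ⟨hx, hy⟩ hnot
    all_goals simp [List.countP_cons, hx, hy]
  haveI n1 : Nonempty {l : List A // IsPath x y l} := ⟨⟨[x, y], hpxy⟩⟩
  haveI n2 : Nonempty {l : List A // IsPath x y l ∧
      l.countP (fun a => decide (a ∈ C)) ≤ 1} := ⟨⟨[x, y], hpxy, hcxy⟩⟩
  have bdd1 : BddAbove (Set.range fun l : {l : List A // IsPath x y l} =>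
      pathScore v l.1) := ⟨B, by rintro r ⟨l, rfl⟩; exact hbound l.1⟩
  have bdd2 : BddAbove (Set.range fun l : {l : List A // IsPath x y l ∧
      l.countP (fun a => decide (a ∈ C)) ≤ 1} => pathScore v l.1) :=
    ⟨B, by rintro r ⟨l, rfl⟩; exact hbound l.1⟩
  apply le_antisymm
  · rw [indirectScore]
    refine ciSup_le ?_
    rintro ⟨l, hl⟩
    obtain ⟨l', hl', hle⟩ := reduce_path v C hC x y hxy hnot l hl
    exact hle.trans (le_ciSup bdd2 ⟨l', hl'⟩)
  · refine ciSup_le ?_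
    rintro ⟨l, hl1, hl2⟩
    rw [indirectScore]
    exact le_ciSup bdd1 ⟨l, hl1⟩
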